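/- arXiv:2505.15200 — 2 statements merged into one kernel-verified Lean document; each statement's English description precedes it below -/
import Mathlib

section
/- For 0 ≤ a < b, the first-order Marcum Q-function satisfies Q₁(a,b) ≤ exp(-(b-a)²/2). -/
open Real

/-- Modified Bessel function of the first kind of order zero. -/
noncomputable def besselI0 (x : ℝ) : ℝ :=
  ∑' k : ℕ, (x / 2) ^ (2 * k) / ((Nat.factorial k : ℝ)) ^ 2

/-- First-order Marcum Q-function `Q₁(a,b) = ∫_b^∞ t e^{-(t²+a²)/2} I₀(at) dt`. -/
noncomputable def marcumQ1 (a b : ℝ) : ℝ :=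
  ∫ t in Set.Ioi b, t * Real.exp (-(t ^ 2 + a ^ 2) / 2) * besselI0 (a * t)


open Finset MeasureTheory Filter


/-- Partial exponential-like sum. -/
noncomputable def expS (k : ℕ) (t : ℝ) : ℝ := ∑ j ∈ Finset.range (k + 1), (t ^ 2 / 2) ^ j / (Nat.factorial j : ℝ)

/-- Antiderivative of `t ^ (2k+1) e^{-t²/2}` (negated). -/
noncomputable def FF (k : ℕ) (t : ℝ) : ℝ :=
  -(2 ^ k * (Nat.factorial k : ℝ) * (Real.exp (-(t ^ 2) / 2) * expS k t))

lemma hasDerivAt_expS (k : ℕ) (t : ℝ) :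
    HasDerivAt (expS k) ((∑ j ∈ Finset.range k, (t ^ 2 / 2) ^ j / (Nat.factorial j : ℝ)) * t) t := by
  have h1 : ∀ j : ℕ, HasDerivAt (fun t : ℝ => (t ^ 2 / 2) ^ j / (Nat.factorial j : ℝ))
      ((j : ℝ) * (t ^ 2 / 2) ^ (j - 1) * t / (Nat.factorial j : ℝ)) t := by
    intro j
    have hb : HasDerivAt (fun t : ℝ => t ^ 2 / 2) t t := by
      simpa using (hasDerivAt_pow 2 t).div_const 2
    simpa [mul_comm, mul_assoc] using ((hb.pow j).div_const (Nat.factorial j : ℝ))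
  have := HasDerivAt.fun_sum (fun j (_ : j ∈ Finset.range (k+1)) => h1 j)
  refine this.congr_deriv (Eq.symm ?_)
  rw [Finset.sum_range_succ' (fun j => (j : ℝ) * (t ^ 2 / 2) ^ (j - 1) * t / (Nat.factorial j : ℝ)) k]
  simp only [Nat.cast_zero, zero_mul, Nat.factorial_zero, Nat.cast_one, zero_div, add_zero,
    Nat.add_sub_cancel]
  rw [Finset.sum_mul]
  apply Finset.sum_congr rfl
  intro j _
  rw [Nat.factorial_succ]
  push_cast
  have : (Nat.factorial j : ℝ) ≠ 0 := Nat.cast_ne_zero.2 (Nat.factorial_ne_zero j)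
  field_simp

lemma hasDerivAt_FF (k : ℕ) (t : ℝ) :
    HasDerivAt (FF k) (t ^ (2 * k + 1) * Real.exp (-(t ^ 2) / 2)) t := by
  have he : HasDerivAt (fun t : ℝ => Real.exp (-(t ^ 2) / 2)) (Real.exp (-(t ^ 2) / 2) * (-t)) t := by
    have h0 : HasDerivAt (fun t : ℝ => -(t ^ 2) / 2) (-t) t := by
      have := (hasDerivAt_pow 2 t).neg.div_const 2
      refine this.congr_deriv (Eq.symm ?_); simp only [Nat.cast_ofNat, Nat.reduceSub, pow_one]; ring
    simpa [mul_comm] using h0.exp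
  have := ((he.mul (hasDerivAt_expS k t)).const_mul ((2:ℝ) ^ k * (Nat.factorial k : ℝ))).neg
  refine this.congr_deriv (Eq.symm ?_)
  unfold expS
  rw [Finset.sum_range_succ]
  have hk : (Nat.factorial k : ℝ) ≠ 0 := Nat.cast_ne_zero.2 (Nat.factorial_ne_zero k)
  have h2 : (t ^ 2 / 2) ^ k * 2 ^ k = t ^ (2 * k) := by
    rw [div_pow, div_mul_eq_mul_div, pow_mul]
    field_simp
  field_simp
  ring_nf
  rw [mul_assoc _ ((1/2:ℝ)^k), ← mul_pow]; norm_num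

lemma tendsto_FF (k : ℕ) : Tendsto (FF k) atTop (nhds 0) := by
  have h : ∀ j : ℕ, Tendsto (fun t : ℝ => (t ^ 2 / 2) ^ j * Real.exp (-(t ^ 2) / 2)) atTop (nhds 0) := by
    intro j
    have h1 : Tendsto (fun t : ℝ => t ^ 2 / 2) atTop atTop := by
      apply Tendsto.atTop_div_const (by norm_num)
      exact tendsto_pow_atTop (by norm_num)
    have h2 := (tendsto_pow_mul_exp_neg_atTop_nhds_zero j).comp h1
    refine h2.congr fun t => ?_
    simp only [Function.comp]
    ring_nf
  have h3 : Tendsto (fun t => Real.exp (-(t ^ 2) / 2) * expS k t) atTop (nhds 0) := by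
    have := tendsto_finset_sum (Finset.range (k + 1))
      (fun j (_ : j ∈ Finset.range (k+1)) => (h j).div_const (Nat.factorial j : ℝ))
    simp only [zero_div, Finset.sum_const_zero] at this
    refine this.congr fun t => ?_
    unfold expS
    rw [Finset.mul_sum]
    apply Finset.sum_congr rfl
    intro j _
    ring
  have := (h3.const_mul ((2:ℝ) ^ k * (Nat.factorial k : ℝ))).neg
  unfold FF
  simpa using this

lemma FF_integral (k : ℕ) {b : ℝ} (hb : 0 < b) :
    IntegrableOn (fun t => t ^ (2 * k + 1) * Real.exp (-(t ^ 2) / 2)) (Set.Ioi b) ∧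
    ∫ t in Set.Ioi b, t ^ (2 * k + 1) * Real.exp (-(t ^ 2) / 2)
      = 2 ^ k * (Nat.factorial k : ℝ) * (Real.exp (-(b ^ 2) / 2) * expS k b) := by
  have hderiv : ∀ t ∈ Set.Ioi b, HasDerivAt (FF k) (t ^ (2 * k + 1) * Real.exp (-(t ^ 2) / 2)) t :=
    fun t _ => hasDerivAt_FF k t
  have hpos : ∀ t ∈ Set.Ioi b, 0 ≤ t ^ (2 * k + 1) * Real.exp (-(t ^ 2) / 2) := by
    intro t ht
    have : 0 < t := hb.trans ht
    positivity
  have hcont : ContinuousWithinAt (FF k) (Set.Ici b) b :=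
    (hasDerivAt_FF k b).continuousAt.continuousWithinAt
  refine ⟨integrableOn_Ioi_deriv_of_nonneg hcont hderiv hpos (tendsto_FF k), ?_⟩
  rw [integral_Ioi_of_hasDerivAt_of_nonneg hcont hderiv hpos (tendsto_FF k)]
  simp [FF]

lemma pow_ineq {a b : ℝ} (ha : 0 ≤ a) (hab : a ≤ b) {j k : ℕ} (hjk : j ≤ k) :
    a ^ (2 * k) * b ^ (2 * j) ≤ (a * b) ^ (k + j) := by
  obtain ⟨d, rfl⟩ : ∃ d, k = j + d := ⟨k - j, (Nat.add_sub_cancel' hjk).symm⟩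
  have hb : (0:ℝ) ≤ b := ha.trans hab
  have h1 : a ^ d ≤ b ^ d := pow_le_pow_left₀ ha hab d
  have h2 : (0:ℝ) ≤ a ^ (j + d + j) * b ^ (2 * j) :=
    mul_nonneg (pow_nonneg ha _) (pow_nonneg hb _)
  calc a ^ (2 * (j + d)) * b ^ (2 * j)
      = (a ^ (j + d + j) * b ^ (2 * j)) * a ^ d := by
        rw [show 2 * (j + d) = (j + d + j) + d by ring, pow_add]; ring
    _ ≤ (a ^ (j + d + j) * b ^ (2 * j)) * b ^ d := by
        exact mul_le_mul_of_nonneg_left h1 h2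
    _ = (a * b) ^ (j + d + j) := by
        rw [mul_pow, show j + d + j = 2 * j + d by ring, pow_add]; ring
    _ = (a * b) ^ (j + d + j) := rfl

theorem marcumQ1_exp_upper_bound (a b : ℝ) (ha : 0 ≤ a) (hab : a < b) :
    marcumQ1 a b ≤ Real.exp (-(b - a) ^ 2 / 2) := by
  have hb : 0 < b := lt_of_le_of_lt ha hab
  set g : ℕ → ℝ → ℝ := fun k t =>
    t * Real.exp (-(t ^ 2 + a ^ 2) / 2) * (((a * t) / 2) ^ (2 * k) / (Nat.factorial k : ℝ) ^ 2)
    with hg_def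
  have hC : ∀ k : ℕ, (0:ℝ) ≤ Real.exp (-(a ^ 2) / 2) * ((a / 2) ^ (2 * k) / (Nat.factorial k : ℝ) ^ 2) := by
    intro k
    have : (0:ℝ) ≤ (a / 2) ^ (2 * k) := by rw [pow_mul]; positivity
    positivity
  -- g k as constant times the standard integrand
  have hgeq : ∀ k : ℕ, g k = fun t =>
      (Real.exp (-(a ^ 2) / 2) * ((a / 2) ^ (2 * k) / (Nat.factorial k : ℝ) ^ 2)) *
        (t ^ (2 * k + 1) * Real.exp (-(t ^ 2) / 2)) := by
    intro k
    funext t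
    rw [hg_def]
    have h1 : Real.exp (-(t ^ 2 + a ^ 2) / 2) = Real.exp (-(t ^ 2) / 2) * Real.exp (-(a ^ 2) / 2) := by
      rw [← Real.exp_add]; congr 1; ring
    have h2 : ((a * t) / 2) ^ (2 * k) = (a / 2) ^ (2 * k) * t ^ (2 * k) := by
      rw [← mul_pow]; congr 1; ring
    simp only [h1, h2]
    ring
  have hg_nonneg : ∀ k : ℕ, ∀ t ∈ Set.Ioi b, 0 ≤ g k t := by
    intro k t ht
    have ht' : 0 < t := hb.trans ht
    rw [hgeq k]
    positivity
  have hg_int : ∀ k : ℕ, IntegrableOn (g k) (Set.Ioi b) := by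
    intro k
    rw [hgeq k]
    exact ((FF_integral k hb).1.const_mul _)
  -- value of each integral
  set T : ℕ → ℝ := fun k => Real.exp (-(a ^ 2) / 2) * ((a ^ 2 / 2) ^ k / (Nat.factorial k : ℝ)) *
      (Real.exp (-(b ^ 2) / 2) * expS k b) with hT_def
  have hTval : ∀ k : ℕ, ∫ t in Set.Ioi b, g k t = T k := by
    intro k
    rw [hgeq k, MeasureTheory.integral_const_mul, (FF_integral k hb).2]
    simp only [hT_def]
    have hk : (Nat.factorial k : ℝ) ≠ 0 := Nat.cast_ne_zero.2 (Nat.factorial_ne_zero k)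
    have h2 : (a / 2) ^ (2 * k) * 2 ^ k = (a ^ 2 / 2) ^ k := by
      rw [pow_mul, ← mul_pow]; congr 1; ring
    have key : (a / 2) ^ (2 * k) / (Nat.factorial k : ℝ) ^ 2 * (2 ^ k * (Nat.factorial k : ℝ))
        = (a ^ 2 / 2) ^ k / (Nat.factorial k : ℝ) := by
      rw [← h2]
      field_simp
    rw [← key]
    ring
  have hnorm : ∀ k : ℕ, ∫ t in Set.Ioi b, ‖g k t‖ = T k := by
    intro k
    rw [← hTval k]
    exact setIntegral_congr_fun measurableSet_Ioi fun t ht => Real.norm_of_nonneg (hg_nonneg k t ht)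
  have hexpS_nonneg : ∀ k, 0 ≤ expS k b := by
    intro k
    unfold expS
    apply Finset.sum_nonneg
    intro j _
    positivity
  have hT_nonneg : ∀ k, 0 ≤ T k := by
    intro k
    simp only [hT_def]
    have hS := hexpS_nonneg k
    have h3 : (0:ℝ) ≤ (a ^ 2 / 2) ^ k := by positivity
    positivity
  set U : ℕ → ℝ := fun k => Real.exp (-(a ^ 2) / 2) * Real.exp (-(b ^ 2) / 2) *
      Real.exp (a * b / 2) * ((a * b / 2) ^ k / (Nat.factorial k : ℝ)) with hU_def
  have hT_le : ∀ k, T k ≤ U k := by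
    intro k
    simp only [hT_def, hU_def]
    have habn : (0:ℝ) ≤ a * b := mul_nonneg ha hb.le
    have hkey : (a ^ 2 / 2) ^ k / (Nat.factorial k : ℝ) * expS k b
        ≤ (a * b / 2) ^ k / (Nat.factorial k : ℝ) * Real.exp (a * b / 2) := by
      calc (a ^ 2 / 2) ^ k / (Nat.factorial k : ℝ) * expS k b
          = ∑ j ∈ Finset.range (k + 1), (a ^ 2 / 2) ^ k * (b ^ 2 / 2) ^ j /
              ((Nat.factorial k : ℝ) * (Nat.factorial j : ℝ)) := by
            unfold expS
            rw [Finset.mul_sum]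
            apply Finset.sum_congr rfl
            intro j _
            ring
        _ ≤ ∑ j ∈ Finset.range (k + 1), (a * b / 2) ^ k * (a * b / 2) ^ j /
              ((Nat.factorial k : ℝ) * (Nat.factorial j : ℝ)) := by
            apply Finset.sum_le_sum
            intro j hj
            have hjk : j ≤ k := Nat.lt_succ_iff.mp (Finset.mem_range.mp hj)
            have hpi := pow_ineq ha hab.le hjk
            have hnum : (a ^ 2 / 2) ^ k * (b ^ 2 / 2) ^ j ≤ (a * b / 2) ^ k * (a * b / 2) ^ j := by
              have e1 : (a ^ 2 / 2) ^ k * (b ^ 2 / 2) ^ j = a ^ (2 * k) * b ^ (2 * j) / 2 ^ (k + j) := by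
                rw [div_pow, div_pow, ← pow_mul, ← pow_mul, pow_add]
                ring
              have e2 : (a * b / 2) ^ k * (a * b / 2) ^ j = (a * b) ^ (k + j) / 2 ^ (k + j) := by
                rw [div_pow, div_pow, pow_add]
                ring
              rw [e1, e2]
              gcongr
            have hfac : (0:ℝ) < (Nat.factorial k : ℝ) * (Nat.factorial j : ℝ) := by positivity
            exact div_le_div_of_nonneg_right hnum hfac.le
        _ = (a * b / 2) ^ k / (Nat.factorial k : ℝ) *
              ∑ j ∈ Finset.range (k + 1), (a * b / 2) ^ j / (Nat.factorial j : ℝ) := by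
            rw [Finset.mul_sum]
            apply Finset.sum_congr rfl
            intro j _
            ring
        _ ≤ (a * b / 2) ^ k / (Nat.factorial k : ℝ) * Real.exp (a * b / 2) := by
            apply mul_le_mul_of_nonneg_left (Real.sum_le_exp_of_nonneg (by positivity) (k + 1))
            positivity
    calc Real.exp (-(a ^ 2) / 2) * ((a ^ 2 / 2) ^ k / (Nat.factorial k : ℝ)) *
          (Real.exp (-(b ^ 2) / 2) * expS k b)
        = (Real.exp (-(a ^ 2) / 2) * Real.exp (-(b ^ 2) / 2)) *
            ((a ^ 2 / 2) ^ k / (Nat.factorial k : ℝ) * expS k b) := by ring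
      _ ≤ (Real.exp (-(a ^ 2) / 2) * Real.exp (-(b ^ 2) / 2)) *
            ((a * b / 2) ^ k / (Nat.factorial k : ℝ) * Real.exp (a * b / 2)) := by
          apply mul_le_mul_of_nonneg_left hkey
          positivity
      _ = Real.exp (-(a ^ 2) / 2) * Real.exp (-(b ^ 2) / 2) * Real.exp (a * b / 2) *
            ((a * b / 2) ^ k / (Nat.factorial k : ℝ)) := by ring
  have hU_summable : Summable U := by
    simp only [hU_def]
    exact (Real.summable_pow_div_factorial (a * b / 2)).mul_left _
  have hT_summable : Summable T := Summable.of_nonneg_of_le hT_nonneg hT_le hU_summable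
  have hmq : marcumQ1 a b = ∑' k, T k := by
    have h1 : marcumQ1 a b = ∫ t in Set.Ioi b, ∑' k, g k t := by
      unfold marcumQ1 besselI0
      apply setIntegral_congr_fun measurableSet_Ioi
      intro t _
      exact (tsum_mul_left).symm
    have h2 := MeasureTheory.integral_tsum_of_summable_integral_norm
      (μ := MeasureTheory.volume.restrict (Set.Ioi b)) (F := g) hg_int
      (by simpa only [funext hnorm] using hT_summable)
    rw [h1, ← h2]
    exact tsum_congr hTval |>.symm ▸ rfl
  rw [hmq]
  refine le_trans (Summable.tsum_le_tsum hT_le hT_summable hU_summable) ?_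
  have hexp : ∀ x : ℝ, ∑' k : ℕ, x ^ k / (Nat.factorial k : ℝ) = Real.exp x := by
    intro x
    rw [Real.exp_eq_exp_ℝ, NormedSpace.exp_eq_tsum_div]
  simp only [hU_def]
  rw [tsum_mul_left, hexp]
  rw [← Real.exp_add, ← Real.exp_add, ← Real.exp_add]
  apply le_of_eq
  congr 1
  ring
end

section
/- The function Q₁(a, b) is nondecreasing in a ≥ 0 for each fixed b ≥ 0, and nonincreasing in b ≥ 0 for each fixed a ≥ 0. -/
open Real Set MeasureTheory

lemma besselTerm_eq (x : ℝ) (k : ℕ) :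
    (x / 2) ^ (2 * k) / ((Nat.factorial k : ℝ)) ^ 2
      = (x ^ 2 / 4) ^ k / ((Nat.factorial k : ℝ)) ^ 2 := by
  rw [pow_mul]; ring_nf

lemma besselTerm_nonneg (x : ℝ) (k : ℕ) :
    0 ≤ (x / 2) ^ (2 * k) / ((Nat.factorial k : ℝ)) ^ 2 := by
  rw [besselTerm_eq]; positivity

lemma besselSummable (x : ℝ) :
    Summable (fun k : ℕ => (x / 2) ^ (2 * k) / ((Nat.factorial k : ℝ)) ^ 2) := by
  refine Summable.of_nonneg_of_le (besselTerm_nonneg x) (fun k => ?_)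
    (Real.summable_pow_div_factorial (x ^ 2 / 4))
  rw [besselTerm_eq]
  have h1 : (1 : ℝ) ≤ (Nat.factorial k : ℝ) := by
    exact_mod_cast Nat.one_le_iff_ne_zero.mpr (Nat.factorial_ne_zero k)
  have h2 : (Nat.factorial k : ℝ) ≤ ((Nat.factorial k : ℝ)) ^ 2 := by nlinarith
  exact div_le_div_of_nonneg_left (by positivity) (by positivity) h2

lemma besselI0_nonneg (x : ℝ) : 0 ≤ besselI0 x :=
  tsum_nonneg (besselTerm_nonneg x)

lemma factorial_two_mul_le (k : ℕ) :
    (Nat.factorial (2 * k) : ℝ) ≤ 4 ^ k * (Nat.factorial k : ℝ) ^ 2 := by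
  have h1 : Nat.factorial (2 * k) = (2 * k).choose k * (Nat.factorial k * Nat.factorial k) := by
    have := Nat.choose_mul_factorial_mul_factorial (show k ≤ 2 * k by omega)
    have h2 : 2 * k - k = k := by omega
    rw [h2] at this
    rw [← this, Nat.mul_assoc]
  have h3 : (2 * k).choose k ≤ 4 ^ k := by
    calc (2 * k).choose k ≤ (2 * k + 1).choose k := Nat.choose_le_choose k (by omega)
      _ ≤ 4 ^ k := Nat.choose_middle_le_pow k
  have := Nat.mul_le_mul_right (Nat.factorial k * Nat.factorial k) h3
  rw [← h1] at this
  calc (Nat.factorial (2 * k) : ℝ) ≤ ((4 ^ k * (Nat.factorial k * Nat.factorial k) : ℕ) : ℝ) := by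
        exact_mod_cast this
    _ = 4 ^ k * (Nat.factorial k : ℝ) ^ 2 := by push_cast; ring

lemma besselI0_le_exp {x : ℝ} (hx : 0 ≤ x) : besselI0 x ≤ Real.exp x := by
  have hexp : Real.exp x = ∑' n : ℕ, x ^ n / (Nat.factorial n : ℝ) := by
    rw [Real.exp_eq_exp_ℝ, NormedSpace.exp_eq_tsum_div]
  rw [hexp, besselI0]
  have hs : Summable (fun n : ℕ => x ^ n / (Nat.factorial n : ℝ)) :=
    Real.summable_pow_div_factorial x
  have step1 : ∀ k : ℕ, (x / 2) ^ (2 * k) / ((Nat.factorial k : ℝ)) ^ 2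
      ≤ x ^ (2 * k) / (Nat.factorial (2 * k) : ℝ) := by
    intro k
    have hxk : (x / 2) ^ (2 * k) = x ^ (2 * k) / 4 ^ k := by
      rw [div_pow]; congr 1; rw [pow_mul]; norm_num
    rw [hxk, div_div]
    apply div_le_div_of_nonneg_left (by positivity) (by positivity)
    exact factorial_two_mul_le k
  calc (∑' k : ℕ, (x / 2) ^ (2 * k) / ((Nat.factorial k : ℝ)) ^ 2)
      ≤ ∑' k : ℕ, x ^ (2 * k) / (Nat.factorial (2 * k) : ℝ) := by
        apply Summable.tsum_le_tsum step1 (besselSummable x)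
        exact hs.comp_injective (fun a b h => by omega)
    _ ≤ ∑' n : ℕ, x ^ n / (Nat.factorial n : ℝ) := by
        exact tsum_comp_le_tsum_of_inj hs (fun n => by positivity)
          (fun a b h => by omega)

lemma besselI0_continuous : Continuous besselI0 := by
  rw [continuous_iff_continuousAt]
  intro x
  have hR : x ∈ Ioo (-(|x| + 1)) (|x| + 1) := by
    constructor <;> cases abs_cases x <;> simp_all <;> nlinarith [abs_nonneg x, neg_abs_le x, le_abs_self x]
  set R := |x| + 1 with hRdef
  have hcont : ContinuousOn besselI0 (Ioo (-R) R) := by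
    apply continuousOn_tsum (u := fun k => (R / 2) ^ (2 * k) / ((Nat.factorial k : ℝ)) ^ 2)
    · intro k; fun_prop
    · exact besselSummable R
    · intro k y hy
      have hyR : |y| ≤ R := by
        rw [abs_le]; exact ⟨hy.1.le, hy.2.le⟩
      have hR0 : (0:ℝ) ≤ R := (abs_nonneg y).trans hyR
      rw [Real.norm_eq_abs, abs_div, abs_pow]
      rw [show |(↑(Nat.factorial k) : ℝ) ^ 2| = ((Nat.factorial k : ℝ)) ^ 2 from abs_of_nonneg (by positivity)]
      apply div_le_div_of_nonneg_right ?_ (by positivity) |>.trans_eq rfl |> fun h => h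
      gcongr
      rw [abs_div]
      simp only [abs_two]
      exact div_le_div_of_nonneg_right hyR (by norm_num)
  exact hcont.continuousAt (Ioo_mem_nhds hR.1 hR.2)

/-- The Gaussian moment integrand. -/
noncomputable def Gm (n : ℕ) (b : ℝ) : ℝ := ∫ t in Ioi b, t ^ (2 * n + 1) * Real.exp (-t ^ 2 / 2)

lemma gauss_integrableOn (n : ℕ) {b : ℝ} (hb : 0 ≤ b) :
    IntegrableOn (fun t : ℝ => t ^ n * Real.exp (-t ^ 2 / 2)) (Ioi b) := by
  have h : IntegrableOn (fun t : ℝ => t ^ ((n : ℝ) : ℝ) * Real.exp (-(1/2) * t ^ 2)) (Ioi 0) :=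
    integrableOn_rpow_mul_exp_neg_mul_sq (by norm_num)
      (lt_of_lt_of_le (by norm_num : (-1:ℝ) < 0) (Nat.cast_nonneg n))
  have h2 : IntegrableOn (fun t : ℝ => t ^ n * Real.exp (-t ^ 2 / 2)) (Ioi 0) := by
    apply h.congr_fun ?_ measurableSet_Ioi
    intro t _
    have he : -(1/2 : ℝ) * t^2 = -t^2/2 := by ring
    simp only [Real.rpow_natCast, he]
  exact h2.mono_set (Ioi_subset_Ioi hb)


lemma gauss_tendsto_zero (n : ℕ) :
    Filter.Tendsto (fun t : ℝ => t ^ n * Real.exp (-t ^ 2 / 2)) Filter.atTop (nhds 0) := by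
  have h1 : Filter.Tendsto (fun t : ℝ => t ^ n * Real.exp (-t)) Filter.atTop (nhds 0) :=
    tendsto_pow_mul_exp_neg_atTop_nhds_zero n
  apply squeeze_zero' ?_ ?_ h1
  · filter_upwards [Filter.eventually_ge_atTop (0:ℝ)] with t ht
    positivity
  · filter_upwards [Filter.eventually_ge_atTop (2:ℝ)] with t ht
    have : -t ^ 2 / 2 ≤ -t := by nlinarith
    have h2 : Real.exp (-t ^ 2 / 2) ≤ Real.exp (-t) := Real.exp_le_exp.mpr this
    have h3 : (0:ℝ) ≤ t ^ n := by positivity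
    exact mul_le_mul_of_nonneg_left h2 h3

lemma Gm_succ (n : ℕ) {b : ℝ} (hb : 0 ≤ b) :
    Gm (n + 1) b = (2 * n + 2) * Gm n b + b ^ (2 * n + 2) * Real.exp (-b ^ 2 / 2) := by
  -- F t = t ^ (2n+2) * exp (-t^2/2), F' t = (2n+2) t^(2n+1) e^{-t^2/2} - t^(2n+3) e^{-t^2/2}
  set m : ℕ := 2 * n + 2 with hm
  have hderiv : ∀ t : ℝ, HasDerivAt (fun t : ℝ => t ^ m * Real.exp (-t ^ 2 / 2))
      ((m : ℝ) * t ^ (2 * n + 1) * Real.exp (-t ^ 2 / 2)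
        - t ^ (2 * n + 3) * Real.exp (-t ^ 2 / 2)) t := by
    intro t
    have h1 : HasDerivAt (fun t : ℝ => t ^ m) ((m : ℝ) * t ^ (m - 1)) t := hasDerivAt_pow m t
    have h2 : HasDerivAt (fun t : ℝ => Real.exp (-t ^ 2 / 2)) (Real.exp (-t ^ 2 / 2) * (-t)) t := by
      have h3 : HasDerivAt (fun t : ℝ => -t ^ 2 / 2) (-t) t := by
        have := (hasDerivAt_pow 2 t).neg.div_const 2
        exact this.congr_deriv (by push_cast; ring)
      exact (Real.hasDerivAt_exp _).comp t h3
    have := h1.mul h2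
    have hm1 : m - 1 = 2 * n + 1 := by omega
    exact this.congr_deriv (by rw [hm1, hm]; push_cast; ring)
  have htend : Filter.Tendsto (fun t : ℝ => t ^ m * Real.exp (-t ^ 2 / 2))
      Filter.atTop (nhds 0) := gauss_tendsto_zero m
  have hint : IntegrableOn (fun t : ℝ => (m : ℝ) * t ^ (2 * n + 1) * Real.exp (-t ^ 2 / 2)
      - t ^ (2 * n + 3) * Real.exp (-t ^ 2 / 2)) (Ioi b) := by
    apply Integrable.sub
    · simpa [mul_assoc] using (gauss_integrableOn (2 * n + 1) hb).const_mul (m : ℝ)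
    · exact gauss_integrableOn (2 * n + 3) hb
  have key := integral_Ioi_of_hasDerivAt_of_tendsto' (fun x _ => hderiv x) hint htend
  have hsplit : ∫ t in Ioi b, ((m : ℝ) * t ^ (2 * n + 1) * Real.exp (-t ^ 2 / 2)
      - t ^ (2 * n + 3) * Real.exp (-t ^ 2 / 2))
      = (m : ℝ) * Gm n b - Gm (n + 1) b := by
    rw [integral_sub (by simpa [mul_assoc] using (gauss_integrableOn (2 * n + 1) hb).const_mul (m : ℝ)) (gauss_integrableOn (2 * n + 3) hb)]
    have e1 : ∫ t in Ioi b, (m:ℝ) * t ^ (2*n+1) * Real.exp (-t^2/2) = (m:ℝ) * Gm n b := by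
      rw [Gm, ← integral_const_mul]
      exact setIntegral_congr_fun measurableSet_Ioi (fun t _ => by ring)
    have e2 : Gm (n+1) b = ∫ t in Ioi b, t ^ (2*n+3) * Real.exp (-t^2/2) := by
      rw [Gm]
      have h23 : 2*(n+1)+1 = 2*n+3 := by omega
      rw [h23]
    rw [e1, ← e2]
  rw [hsplit] at key
  have : (m : ℝ) * Gm n b - Gm (n+1) b = 0 - b ^ m * Real.exp (-b ^ 2 / 2) := key
  push_cast at this ⊢
  have hmc : (m : ℝ) = 2 * n + 2 := by rw [hm]; push_cast; ring
  rw [hmc] at this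
  linarith

lemma Gm_zero (b : ℝ) (hb : 0 ≤ b) : Gm 0 b = Real.exp (-b ^ 2 / 2) := by
  have hderiv : ∀ t : ℝ, HasDerivAt (fun t : ℝ => -Real.exp (-t ^ 2 / 2))
      (t ^ (2 * 0 + 1) * Real.exp (-t ^ 2 / 2)) t := by
    intro t
    have h3 : HasDerivAt (fun t : ℝ => -t ^ 2 / 2) (-t) t := by
      have := (hasDerivAt_pow 2 t).neg.div_const 2
      exact this.congr_deriv (by push_cast; ring)
    have := ((Real.hasDerivAt_exp _).comp t h3).neg
    exact this.congr_deriv (by ring)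
  have htend : Filter.Tendsto (fun t : ℝ => -Real.exp (-t ^ 2 / 2)) Filter.atTop (nhds 0) := by
    have := (gauss_tendsto_zero 0).neg
    simpa using this
  have key := integral_Ioi_of_hasDerivAt_of_tendsto' (fun x _ => hderiv x)
    (gauss_integrableOn (2 * 0 + 1) hb) htend
  unfold Gm
  rw [key]
  ring

lemma Gm_nonneg (n : ℕ) {b : ℝ} (hb : 0 ≤ b) : 0 ≤ Gm n b := by
  apply setIntegral_nonneg measurableSet_Ioi
  intro t ht
  have : 0 < t := lt_of_le_of_lt hb ht
  positivity

lemma Gm_le_Gm_zero (n : ℕ) {b : ℝ} (hb : 0 ≤ b) : Gm n b ≤ Gm n 0 := by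
  apply setIntegral_mono_set (gauss_integrableOn (2 * n + 1) le_rfl)
  · filter_upwards [ae_restrict_mem measurableSet_Ioi] with t ht
    have : 0 < t := ht
    positivity
  · exact HasSubset.Subset.eventuallyLE (Ioi_subset_Ioi hb)

lemma Gm_zero_val (n : ℕ) : Gm n 0 = 2 ^ n * (Nat.factorial n : ℝ) := by
  induction n with
  | zero => simpa using Gm_zero 0 le_rfl
  | succ k ih =>
    rw [Gm_succ k le_rfl, ih]
    have : (0:ℝ) ^ (2 * k + 2) = 0 := by simp
    rw [this]
    push_cast [Nat.factorial_succ]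
    ring

/-- Normalized tail coefficient. -/
noncomputable def ck (n : ℕ) (b : ℝ) : ℝ := Gm n b / (2 ^ n * (Nat.factorial n : ℝ))

lemma ck_nonneg (n : ℕ) {b : ℝ} (hb : 0 ≤ b) : 0 ≤ ck n b :=
  div_nonneg (Gm_nonneg n hb) (by positivity)

lemma ck_le_one (n : ℕ) {b : ℝ} (hb : 0 ≤ b) : ck n b ≤ 1 := by
  rw [ck, div_le_one (by positivity)]
  calc Gm n b ≤ Gm n 0 := Gm_le_Gm_zero n hb
    _ = 2 ^ n * (Nat.factorial n : ℝ) := Gm_zero_val n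

lemma ck_mono {b : ℝ} (hb : 0 ≤ b) : Monotone (fun n => ck n b) := by
  apply monotone_nat_of_le_succ
  intro n
  have hrec := Gm_succ n hb
  have hpos : (0:ℝ) < 2 ^ (n+1) * (Nat.factorial (n+1) : ℝ) := by positivity
  rw [ck, ck, div_le_div_iff₀ (by positivity) hpos]
  rw [hrec]
  have hb2 : 0 ≤ b ^ (2 * n + 2) * Real.exp (-b ^ 2 / 2) := by positivity
  have hfact : (Nat.factorial (n+1) : ℝ) = (n + 1) * (Nat.factorial n : ℝ) := by
    push_cast [Nat.factorial_succ]; ring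
  have hG := Gm_nonneg n hb
  rw [hfact, pow_succ]
  have h2n : (0:ℝ) ≤ 2 ^ n * (Nat.factorial n : ℝ) := by positivity
  nlinarith [mul_nonneg hb2 h2n, mul_nonneg hG h2n]

lemma Fterm_eq (a : ℝ) (k : ℕ) (t : ℝ) :
    t * Real.exp (-(t ^ 2 + a ^ 2) / 2) * ((a * t / 2) ^ (2 * k) / ((Nat.factorial k : ℝ)) ^ 2)
    = (Real.exp (-(a ^ 2) / 2) * a ^ (2 * k) / (4 ^ k * ((Nat.factorial k : ℝ)) ^ 2))
        * (t ^ (2 * k + 1) * Real.exp (-t ^ 2 / 2)) := by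
  have hsplit : Real.exp (-(t ^ 2 + a ^ 2) / 2)
      = Real.exp (-t ^ 2 / 2) * Real.exp (-(a ^ 2) / 2) := by
    rw [← Real.exp_add]; ring_nf
  have h4 : (2:ℝ) ^ (2 * k) = 4 ^ k := by
    rw [pow_mul]; norm_num
  rw [hsplit, div_pow, mul_pow, h4]
  field_simp
  ring

lemma Fterm_integrable {a b : ℝ} (hb : 0 ≤ b) (k : ℕ) :
    IntegrableOn (fun t : ℝ =>
      t * Real.exp (-(t ^ 2 + a ^ 2) / 2) * ((a * t / 2) ^ (2 * k) / ((Nat.factorial k : ℝ)) ^ 2))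
      (Ioi b) := by
  have := (gauss_integrableOn (2 * k + 1) hb).const_mul
    (Real.exp (-(a ^ 2) / 2) * a ^ (2 * k) / (4 ^ k * ((Nat.factorial k : ℝ)) ^ 2))
  exact IntegrableOn.congr_fun this (fun t _ => (Fterm_eq a k t).symm) measurableSet_Ioi

lemma Fterm_integral {a b : ℝ} (hb : 0 ≤ b) (k : ℕ) :
    ∫ t in Ioi b,
      t * Real.exp (-(t ^ 2 + a ^ 2) / 2) * ((a * t / 2) ^ (2 * k) / ((Nat.factorial k : ℝ)) ^ 2)
    = Real.exp (-(a ^ 2 / 2)) * ((a ^ 2 / 2) ^ k / (Nat.factorial k : ℝ)) * ck k b := by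
  have h1 : ∀ t ∈ Ioi b,
      t * Real.exp (-(t ^ 2 + a ^ 2) / 2) * ((a * t / 2) ^ (2 * k) / ((Nat.factorial k : ℝ)) ^ 2)
      = (Real.exp (-(a ^ 2) / 2) * a ^ (2 * k) / (4 ^ k * ((Nat.factorial k : ℝ)) ^ 2))
          * (t ^ (2 * k + 1) * Real.exp (-t ^ 2 / 2)) := fun t _ => Fterm_eq a k t
  rw [setIntegral_congr_fun measurableSet_Ioi h1, integral_const_mul]
  have h2 : (∫ t in Ioi b, t ^ (2 * k + 1) * Real.exp (-t ^ 2 / 2)) = Gm k b := rfl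
  rw [h2, ck]
  have hf : (0:ℝ) < (Nat.factorial k : ℝ) := by exact_mod_cast Nat.factorial_pos k
  have ha2k : a ^ (2 * k) = (a ^ 2) ^ k := by rw [pow_mul]
  have h4 : (4:ℝ) ^ k = 2 ^ k * 2 ^ k := by
    rw [← mul_pow]; norm_num
  rw [ha2k, h4]
  rw [div_pow]
  have h2k : ((2:ℝ) ^ k) ≠ 0 := by positivity
  field_simp

lemma marcumQ1_series {a b : ℝ} (ha : 0 ≤ a) (hb : 0 ≤ b) :
    marcumQ1 a b = ∑' k : ℕ,
      Real.exp (-(a ^ 2 / 2)) * ((a ^ 2 / 2) ^ k / (Nat.factorial k : ℝ)) * ck k b := by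
  have hpt : ∀ t : ℝ, t * Real.exp (-(t ^ 2 + a ^ 2) / 2) * besselI0 (a * t)
      = ∑' k : ℕ, t * Real.exp (-(t ^ 2 + a ^ 2) / 2)
          * ((a * t / 2) ^ (2 * k) / ((Nat.factorial k : ℝ)) ^ 2) := by
    intro t
    rw [besselI0, tsum_mul_left]
  have hsum : Summable fun k : ℕ => ∫ t in Ioi b,
      ‖t * Real.exp (-(t ^ 2 + a ^ 2) / 2)
        * ((a * t / 2) ^ (2 * k) / ((Nat.factorial k : ℝ)) ^ 2)‖ := by
    have heq : ∀ k : ℕ, (∫ t in Ioi b,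
        ‖t * Real.exp (-(t ^ 2 + a ^ 2) / 2)
          * ((a * t / 2) ^ (2 * k) / ((Nat.factorial k : ℝ)) ^ 2)‖)
        = Real.exp (-(a ^ 2 / 2)) * ((a ^ 2 / 2) ^ k / (Nat.factorial k : ℝ)) * ck k b := by
      intro k
      rw [← Fterm_integral hb k]
      apply integral_congr_ae
      filter_upwards [ae_restrict_mem measurableSet_Ioi] with t ht
      have ht0 : 0 < t := lt_of_le_of_lt hb ht
      rw [Real.norm_eq_abs, abs_of_nonneg]
      have h1 : (0:ℝ) ≤ (a * t / 2) ^ (2 * k) := by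
        rw [pow_mul]; positivity
      positivity
    apply Summable.congr ?_ (fun k => (heq k).symm)
    apply Summable.of_nonneg_of_le
      (g := fun k => Real.exp (-(a ^ 2 / 2)) * ((a ^ 2 / 2) ^ k / (Nat.factorial k : ℝ)) * ck k b)
      (f := fun k => (a ^ 2 / 2) ^ k / (Nat.factorial k : ℝ))
    · intro k
      have := ck_nonneg k hb
      positivity
    · intro k
      have h1 := ck_le_one k hb
      have h2 : Real.exp (-(a ^ 2 / 2)) ≤ 1 := by
        rw [Real.exp_le_one_iff]
        exact neg_nonpos.mpr (by positivity)
      have h3 : (0:ℝ) ≤ (a ^ 2 / 2) ^ k / (Nat.factorial k : ℝ) := by positivity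
      calc Real.exp (-(a ^ 2 / 2)) * ((a ^ 2 / 2) ^ k / (Nat.factorial k : ℝ)) * ck k b
          ≤ 1 * ((a ^ 2 / 2) ^ k / (Nat.factorial k : ℝ)) * 1 := by
            apply mul_le_mul ?_ h1 (ck_nonneg k hb) (by positivity)
            exact mul_le_mul_of_nonneg_right h2 h3
        _ = (a ^ 2 / 2) ^ k / (Nat.factorial k : ℝ) := by ring
    · exact Real.summable_pow_div_factorial _
  have hswap := integral_tsum_of_summable_integral_norm
    (F := fun (k : ℕ) (t : ℝ) => t * Real.exp (-(t ^ 2 + a ^ 2) / 2)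
      * ((a * t / 2) ^ (2 * k) / ((Nat.factorial k : ℝ)) ^ 2))
    (μ := volume.restrict (Ioi b)) (fun k => Fterm_integrable hb k) hsum
  rw [marcumQ1]
  calc (∫ t in Ioi b, t * Real.exp (-(t ^ 2 + a ^ 2) / 2) * besselI0 (a * t))
      = ∫ t in Ioi b, ∑' k : ℕ, t * Real.exp (-(t ^ 2 + a ^ 2) / 2)
          * ((a * t / 2) ^ (2 * k) / ((Nat.factorial k : ℝ)) ^ 2) := by
        apply integral_congr_ae
        filter_upwards with t using hpt t
    _ = ∑' k : ℕ, ∫ t in Ioi b, t * Real.exp (-(t ^ 2 + a ^ 2) / 2)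
          * ((a * t / 2) ^ (2 * k) / ((Nat.factorial k : ℝ)) ^ 2) := hswap.symm
    _ = ∑' k : ℕ, Real.exp (-(a ^ 2 / 2)) * ((a ^ 2 / 2) ^ k / (Nat.factorial k : ℝ)) * ck k b := by
        exact tsum_congr (fun k => Fterm_integral hb k)

lemma summable_aux {x : ℝ} (hx : 0 ≤ x) (c : ℕ → ℝ) (hc0 : ∀ k, 0 ≤ c k) (hc1 : ∀ k, c k ≤ 1) :
    Summable (fun k : ℕ => c k * ((k : ℝ) * x ^ (k - 1)) / (Nat.factorial k : ℝ)) := by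
  refine Summable.of_nonneg_of_le (fun k => ?_) (fun k => ?_)
    ((Real.summable_pow_div_factorial (2 * (x + 1))))
  · have := hc0 k
    positivity
  · have h1 : (k : ℝ) ≤ 2 ^ k := by
      exact_mod_cast (Nat.lt_two_pow_self (n := k)).le
    have h2 : x ^ (k - 1) ≤ (x + 1) ^ k := by
      calc x ^ (k - 1) ≤ (x + 1) ^ (k - 1) := by
            apply pow_le_pow_left₀ hx; linarith
        _ ≤ (x + 1) ^ k := by
            apply pow_le_pow_right₀ (by linarith) (by omega)
    have hck := hc1 k
    have hc0k := hc0 k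
    have hfk : (0:ℝ) < (Nat.factorial k : ℝ) := by exact_mod_cast Nat.factorial_pos k
    have hnum : c k * ((k : ℝ) * x ^ (k - 1)) ≤ (2 * (x + 1)) ^ k := by
      calc c k * ((k : ℝ) * x ^ (k - 1)) ≤ 1 * ((2:ℝ) ^ k * (x + 1) ^ k) := by
            apply mul_le_mul hck ?_ ?_ (by norm_num)
            · exact mul_le_mul h1 h2 (by positivity) (by positivity)
            · positivity
        _ = (2 * (x + 1)) ^ k := by rw [mul_pow, one_mul]
    gcongr

lemma summable_aux2 {x : ℝ} (hx : 0 ≤ x) (c : ℕ → ℝ) (hc0 : ∀ k, 0 ≤ c k) (hc1 : ∀ k, c k ≤ 1) :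
    Summable (fun k : ℕ => c k * x ^ k / (Nat.factorial k : ℝ)) := by
  refine Summable.of_nonneg_of_le (fun k => ?_) (fun k => ?_)
    (Real.summable_pow_div_factorial x)
  · have := hc0 k; positivity
  · have hfk : (0:ℝ) < (Nat.factorial k : ℝ) := by exact_mod_cast Nat.factorial_pos k
    have hnum : c k * x ^ k ≤ x ^ k := by
      calc c k * x ^ k ≤ 1 * x ^ k := mul_le_mul_of_nonneg_right (hc1 k) (by positivity)
        _ = x ^ k := by ring
    gcongr

lemma poissonSum_mono (c : ℕ → ℝ) (hc0 : ∀ k, 0 ≤ c k) (hc1 : ∀ k, c k ≤ 1)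
    (hmono : Monotone c) :
    MonotoneOn (fun lam => ∑' k : ℕ, Real.exp (-lam) * (lam ^ k / (Nat.factorial k : ℝ)) * c k)
      (Ici (0:ℝ)) := by
  intro l1 hl1 l2 hl2 hle
  simp only [mem_Ici] at hl1 hl2
  set M : ℝ := l2 + 1 with hM
  have hM1 : 1 ≤ M := by linarith
  set g : ℕ → ℝ → ℝ := fun k lam => Real.exp (-lam) * (lam ^ k / (Nat.factorial k : ℝ)) * c k
    with hg
  set g' : ℕ → ℝ → ℝ := fun k lam =>
    Real.exp (-lam) * (((k : ℝ) * lam ^ (k - 1) - lam ^ k) / (Nat.factorial k : ℝ)) * c k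
    with hg'
  have hderiv : ∀ k (y : ℝ), HasDerivAt (g k) (g' k y) y := by
    intro k y
    have h1 : HasDerivAt (fun y : ℝ => Real.exp (-y)) (-Real.exp (-y)) y := by
      have := (Real.hasDerivAt_exp (-y)).comp y (hasDerivAt_neg y)
      exact this.congr_deriv (by ring)
    have h2 : HasDerivAt (fun y : ℝ => y ^ k / (Nat.factorial k : ℝ))
        ((k : ℝ) * y ^ (k - 1) / (Nat.factorial k : ℝ)) y :=
      (hasDerivAt_pow k y).div_const _
    have := (h1.mul h2).mul_const (c k)
    exact this.congr_deriv (by simp only [hg']; ring)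
  have hbound : ∀ k (y : ℝ), y ∈ Ioo (-1 : ℝ) M → ‖g' k y‖ ≤ 9 * (2 * M) ^ k / (Nat.factorial k : ℝ) := by
    intro k y hy
    have hyM : |y| ≤ M := by
      rw [abs_le]; constructor
      · linarith [hy.1.le]
      · exact hy.2.le
    have hexp : Real.exp (-y) ≤ 3 := by
      calc Real.exp (-y) ≤ Real.exp 1 := Real.exp_le_exp.mpr (by linarith [hy.1])
        _ ≤ 3 := by
          have := Real.exp_one_lt_d9
          linarith
    have habs : |((k : ℝ) * y ^ (k - 1) - y ^ k)| ≤ 3 * (2 * M) ^ k := by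
      have h1 : |(k : ℝ) * y ^ (k - 1)| ≤ 2 ^ k * M ^ k := by
        rw [abs_mul, abs_pow]
        apply mul_le_mul ?_ ?_ (by positivity) (by positivity)
        · rw [abs_of_nonneg (Nat.cast_nonneg k)]
          exact_mod_cast (Nat.lt_two_pow_self (n := k)).le
        · calc |y| ^ (k - 1) ≤ M ^ (k - 1) := pow_le_pow_left₀ (abs_nonneg y) hyM _
            _ ≤ M ^ k := pow_le_pow_right₀ hM1 (by omega)
      have h2 : |y ^ k| ≤ 2 ^ k * M ^ k := by
        rw [abs_pow]
        calc |y| ^ k ≤ M ^ k := pow_le_pow_left₀ (abs_nonneg y) hyM _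
          _ ≤ 2 ^ k * M ^ k := by
            have : (1:ℝ) ≤ 2 ^ k := by exact_mod_cast Nat.one_le_two_pow
            nlinarith [pow_nonneg (le_trans zero_le_one hM1) k]
      calc |((k : ℝ) * y ^ (k - 1) - y ^ k)| ≤ |(k : ℝ) * y ^ (k - 1)| + |y ^ k| := abs_sub _ _
        _ ≤ 2 ^ k * M ^ k + 2 ^ k * M ^ k := add_le_add h1 h2
        _ ≤ 3 * (2 * M) ^ k := by
          rw [mul_pow]; nlinarith [pow_nonneg (show (0:ℝ) ≤ 2 by norm_num) k,
            pow_nonneg (le_trans zero_le_one hM1) k, mul_nonneg (pow_nonneg (show (0:ℝ) ≤ 2 by norm_num) k) (pow_nonneg (le_trans zero_le_one hM1) k)]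
    have hck : |c k| ≤ 1 := by rw [abs_of_nonneg (hc0 k)]; exact hc1 k
    have hfk : (0:ℝ) < (Nat.factorial k : ℝ) := by exact_mod_cast Nat.factorial_pos k
    simp only [hg']
    rw [norm_eq_abs, abs_mul, abs_mul, abs_div, abs_of_nonneg (Real.exp_pos _).le,
      abs_of_nonneg hfk.le]
    calc Real.exp (-y) * (|(k : ℝ) * y ^ (k - 1) - y ^ k| / (Nat.factorial k : ℝ)) * |c k|
        ≤ 3 * ((3 * (2 * M) ^ k) / (Nat.factorial k : ℝ)) * 1 := by
          apply mul_le_mul ?_ hck (abs_nonneg _) (by positivity)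
          apply mul_le_mul hexp ?_ (by positivity) (by norm_num)
          gcongr
      _ = 9 * (2 * M) ^ k / (Nat.factorial k : ℝ) := by ring
  have husum : Summable (fun k : ℕ => 9 * (2 * M) ^ k / (Nat.factorial k : ℝ)) := by
    have := (Real.summable_pow_div_factorial (2 * M)).mul_left 9
    apply this.congr
    intro k; ring
  have hg0 : Summable (fun k : ℕ => g k 0) := by
    apply Summable.of_nonneg_of_le (f := fun k : ℕ => (0:ℝ) ^ k / (Nat.factorial k : ℝ))
    · intro k; simp only [hg]; have := hc0 k; positivity
    · intro k
      simp only [hg, Real.exp_zero, neg_zero]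
      have hfk : (0:ℝ) < (Nat.factorial k : ℝ) := by exact_mod_cast Nat.factorial_pos k
      have h0k : (0:ℝ) ≤ (0:ℝ) ^ k / (Nat.factorial k : ℝ) := by positivity
      calc 1 * ((0:ℝ) ^ k / (Nat.factorial k : ℝ)) * c k
          ≤ 1 * ((0:ℝ) ^ k / (Nat.factorial k : ℝ)) * 1 := by
            apply mul_le_mul_of_nonneg_left (hc1 k) (by positivity)
        _ = (0:ℝ) ^ k / (Nat.factorial k : ℝ) := by ring
    · exact Real.summable_pow_div_factorial 0
  have hmem : ∀ y : ℝ, y ∈ Icc (0:ℝ) l2 → y ∈ Ioo (-1:ℝ) M := by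
    intro y hy
    exact ⟨by linarith [hy.1], by linarith [hy.2]⟩
  have hS : ∀ y ∈ Ioo (-1:ℝ) M,
      HasDerivAt (fun lam => ∑' k : ℕ, g k lam) (∑' k, g' k y) y := by
    intro y hy
    exact hasDerivAt_tsum_of_isPreconnected husum isOpen_Ioo (convex_Ioo _ _).isPreconnected
      (fun n y _ => hderiv n y) hbound (show (0:ℝ) ∈ Ioo (-1:ℝ) M from ⟨by norm_num, by linarith⟩) hg0 hy
  have hDnonneg : ∀ y : ℝ, 0 ≤ y → 0 ≤ ∑' k, g' k y := by
    intro y hy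
    have hA := summable_aux hy c hc0 hc1
    have hB := summable_aux2 hy c hc0 hc1
    have hgy : ∀ k, g' k y = Real.exp (-y) * (c k * ((k : ℝ) * y ^ (k - 1)) / (Nat.factorial k : ℝ)
        - c k * y ^ k / (Nat.factorial k : ℝ)) := by
      intro k; simp only [hg']; ring
    have hsum_eq : ∑' k, g' k y = Real.exp (-y) *
        ((∑' k, c k * ((k : ℝ) * y ^ (k - 1)) / (Nat.factorial k : ℝ))
          - ∑' k, c k * y ^ k / (Nat.factorial k : ℝ)) := by
      calc ∑' k, g' k y
          = ∑' k, Real.exp (-y) * (c k * ((k : ℝ) * y ^ (k - 1)) / (Nat.factorial k : ℝ)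
              - c k * y ^ k / (Nat.factorial k : ℝ)) := tsum_congr hgy
        _ = Real.exp (-y) * ∑' k, (c k * ((k : ℝ) * y ^ (k - 1)) / (Nat.factorial k : ℝ)
              - c k * y ^ k / (Nat.factorial k : ℝ)) := tsum_mul_left
        _ = _ := by rw [Summable.tsum_sub hA hB]
    rw [hsum_eq]
    apply mul_nonneg (Real.exp_pos _).le
    rw [sub_nonneg]
    have hshift : (∑' k, c k * ((k : ℝ) * y ^ (k - 1)) / (Nat.factorial k : ℝ))
        = ∑' k, c (k + 1) * y ^ k / (Nat.factorial k : ℝ) := by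
      rw [Summable.tsum_eq_zero_add hA]
      simp only [Nat.cast_zero, zero_mul, mul_zero, zero_div, zero_add]
      apply tsum_congr
      intro k
      have hfk : (Nat.factorial (k+1) : ℝ) = (k + 1) * (Nat.factorial k : ℝ) := by
        push_cast [Nat.factorial_succ]; ring
      have hk1 : ((k + 1 : ℕ) : ℝ) = (k : ℝ) + 1 := by push_cast; ring
      have hsub : (k + 1) - 1 = k := by omega
      rw [hsub, hfk, hk1]
      have hfk0 : (Nat.factorial k : ℝ) ≠ 0 := by
        exact_mod_cast Nat.factorial_ne_zero k
      field_simp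
    rw [hshift]
    apply Summable.tsum_le_tsum ?_ hB ?_
    · intro k
      have hfk : (0:ℝ) < (Nat.factorial k : ℝ) := by exact_mod_cast Nat.factorial_pos k
      gcongr
      exact hmono (Nat.le_succ k)
    · have := (summable_nat_add_iff 1).mpr hA
      apply this.congr
      intro k
      have hfk : (Nat.factorial (k+1) : ℝ) = (k + 1) * (Nat.factorial k : ℝ) := by
        push_cast [Nat.factorial_succ]; ring
      have hsub : (k + 1) - 1 = k := by omega
      rw [hsub, hfk]
      have hfk0 : (Nat.factorial k : ℝ) ≠ 0 := by
        exact_mod_cast Nat.factorial_ne_zero k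
      push_cast
      field_simp
  have hmonoIcc : MonotoneOn (fun lam => ∑' k : ℕ, g k lam) (Icc 0 l2) := by
    apply monotoneOn_of_deriv_nonneg (convex_Icc 0 l2)
    · intro x hx
      exact (hS x (hmem x hx)).continuousAt.continuousWithinAt
    · intro x hx
      rw [interior_Icc] at hx
      exact (hS x (hmem x ⟨hx.1.le, hx.2.le⟩)).differentiableAt.differentiableWithinAt
    · intro x hx
      rw [interior_Icc] at hx
      rw [(hS x (hmem x ⟨hx.1.le, hx.2.le⟩)).deriv]
      exact hDnonneg x hx.1.le
  exact hmonoIcc ⟨hl1, hle⟩ ⟨le_trans hl1 hle, le_rfl⟩ hle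

lemma integrand_continuous (a : ℝ) :
    Continuous (fun t : ℝ => t * Real.exp (-(t ^ 2 + a ^ 2) / 2) * besselI0 (a * t)) := by
  apply Continuous.mul
  · apply Continuous.mul continuous_id
    apply Real.continuous_exp.comp
    fun_prop
  · exact besselI0_continuous.comp (continuous_const.mul continuous_id)

lemma integrand_integrableOn {a b : ℝ} (ha : 0 ≤ a) (hb : 0 ≤ b) :
    IntegrableOn (fun t : ℝ => t * Real.exp (-(t ^ 2 + a ^ 2) / 2) * besselI0 (a * t))
      (Ioi b) := by
  have hg1 : Integrable (fun u : ℝ => |u| * Real.exp (-u ^ 2 / 2)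
      + |a| * Real.exp (-u ^ 2 / 2)) volume := by
    apply Integrable.add
    · have h := (integrable_mul_exp_neg_mul_sq (show (0:ℝ) < 1/2 by norm_num)).abs
      apply h.congr
      filter_upwards with u
      rw [abs_mul, abs_of_nonneg (Real.exp_pos _).le]
      congr 2
      ring
    · exact (integrable_exp_neg_mul_sq (show (0:ℝ) < 1/2 by norm_num)).const_mul |a| |>.congr
        (by filter_upwards with u; congr 2; ring)
  have hg0 : Integrable (fun u : ℝ => |u + a| * Real.exp (-u ^ 2 / 2)) volume := by
    apply hg1.mono'
    · apply Continuous.aestronglyMeasurable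
      fun_prop
    · filter_upwards with u
      rw [Real.norm_eq_abs, abs_mul, abs_abs, abs_of_nonneg (Real.exp_pos _).le]
      have h1 : |u + a| ≤ |u| + |a| := abs_add_le u a
      have h2 : (0:ℝ) < Real.exp (-u ^ 2 / 2) := Real.exp_pos _
      nlinarith
  have hshift : Integrable (fun t : ℝ => |t| * Real.exp (-(t - a) ^ 2 / 2)) volume := by
    have := hg0.comp_sub_right a
    apply this.congr
    filter_upwards with t
    simp only [sub_add_cancel]
  apply (hshift.integrableOn.mono_set (subset_univ _)).mono'
  · exact (integrand_continuous a).aestronglyMeasurable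
  · filter_upwards [ae_restrict_mem measurableSet_Ioi] with t ht
    have ht0 : 0 < t := lt_of_le_of_lt hb ht
    have hbess : besselI0 (a * t) ≤ Real.exp (a * t) := besselI0_le_exp (by positivity)
    have hbess0 : 0 ≤ besselI0 (a * t) := besselI0_nonneg _
    rw [Real.norm_eq_abs, abs_of_nonneg (by positivity), abs_of_pos ht0]
    have hexp : Real.exp (-(t ^ 2 + a ^ 2) / 2) * Real.exp (a * t)
        = Real.exp (-(t - a) ^ 2 / 2) := by
      rw [← Real.exp_add]; congr 1; ring
    calc t * Real.exp (-(t ^ 2 + a ^ 2) / 2) * besselI0 (a * t)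
        ≤ t * Real.exp (-(t ^ 2 + a ^ 2) / 2) * Real.exp (a * t) := by
          apply mul_le_mul_of_nonneg_left hbess (by positivity)
      _ = t * Real.exp (-(t - a) ^ 2 / 2) := by rw [mul_assoc, hexp]

theorem marcumQ1_monotonicity :
    (∀ b : ℝ, 0 ≤ b → MonotoneOn (fun a => marcumQ1 a b) (Set.Ici 0)) ∧
    (∀ a : ℝ, 0 ≤ a → AntitoneOn (fun b => marcumQ1 a b) (Set.Ici 0)) := by
  constructor
  · intro b hb a1 ha1 a2 ha2 hle
    simp only [mem_Ici] at ha1 ha2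
    simp only
    rw [marcumQ1_series ha1 hb, marcumQ1_series ha2 hb]
    have hmono := poissonSum_mono (fun k => ck k b) (fun k => ck_nonneg k hb)
      (fun k => ck_le_one k hb) (ck_mono hb)
    exact hmono (mem_Ici.mpr (by positivity)) (mem_Ici.mpr (by positivity))
      (by apply div_le_div_of_nonneg_right ?_ (by norm_num) |>.trans_eq rfl |> fun h => h
          · exact pow_le_pow_left₀ ha1 hle 2)
  · intro a ha b1 hb1 b2 hb2 hle
    simp only [mem_Ici] at hb1 hb2
    simp only
    apply setIntegral_mono_set (integrand_integrableOn ha hb1)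
    · filter_upwards [ae_restrict_mem measurableSet_Ioi] with t ht
      have ht0 : 0 < t := lt_of_le_of_lt hb1 ht
      have := besselI0_nonneg (a * t)
      positivity
    · exact HasSubset.Subset.eventuallyLE (Ioi_subset_Ioi hle)
end
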